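/- For every k-ary game v, the importance index φ with φ_i(v) = Σ_{x_{-i} ∈ L_{-i}} [(n − s(x_{-i}) − 1)! k(x_{-i})! / (n + k(x_{-i}) − s(x_{-i}))!] (v(x_{-i}, k_i) − v(x_{-i}, 0_i)) satisfies Σ_{i∈N} φ_i(v) = Σ_{x ∈ {0,…,k−1}^N} (v(x+1) − v(x)), where x+1 = (x_1+1,…,x_n+1). -/

import Mathlib

open Finset
open scoped Classical

/-- The top level `k` of `L_i`. -/
def top (k : ℕ) : Fin (k+1) := ⟨k, by omega⟩

/-- `s(x_{-i})`: number of nonzero components of `x_{-i}`. -/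
def sOut {n k : ℕ} (i : Fin n) (x : Fin n → Fin (k+1)) : ℕ :=
  (univ.filter (fun j : Fin n => j ≠ i ∧ (x j : ℕ) > 0)).card

/-- `k(x_{-i})`: number of components of `x_{-i}` equal to `k`. -/
def kOut {n k : ℕ} (i : Fin n) (x : Fin n → Fin (k+1)) : ℕ :=
  (univ.filter (fun j : Fin n => j ≠ i ∧ (x j : ℕ) = k)).card

/-- The importance index
`φ_i(v) = Σ_{x_{-i}} (n-s-1)! k! / (n+k-s)! (v(x_{-i},k_i) - v(x_{-i},0_i))`,
where `L_{-i}` is identified with `{x ∈ L | x i = 0}`. -/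
noncomputable def impIndex {n k : ℕ} (i : Fin n) (v : (Fin n → Fin (k+1)) → ℝ) : ℝ :=
  ∑ x ∈ univ.filter (fun x : Fin n → Fin (k+1) => x i = 0),
    (((n - sOut i x - 1).factorial * (kOut i x).factorial : ℕ) : ℝ) /
        ((n + kOut i x - sOut i x).factorial : ℝ) *
      (v (Function.update x i (top k)) - v (Function.update x i 0))

/-- `x + 1 = (x_1+1, …, x_n+1)` (capped at `k`). -/
def incrAll {n k : ℕ} (x : Fin n → Fin (k+1)) : Fin n → Fin (k+1) :=
  fun i => ⟨min ((x i : ℕ) + 1) k, by omega⟩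

noncomputable def coeff {n k : ℕ} (i : Fin n) (x : Fin n → Fin (k+1)) : ℝ :=
  (((n - sOut i x - 1).factorial * (kOut i x).factorial : ℕ) : ℝ) /
    ((n + kOut i x - sOut i x).factorial : ℝ)

lemma sOut_update {n k : ℕ} (i : Fin n) (x : Fin n → Fin (k+1)) (a : Fin (k+1)) :
    sOut i (Function.update x i a) = sOut i x := by
  unfold sOut
  congr 1
  apply filter_congr
  intro j _
  by_cases h : j = i
  · simp [h]
  · simp [h, Function.update_of_ne h]

lemma kOut_update {n k : ℕ} (i : Fin n) (x : Fin n → Fin (k+1)) (a : Fin (k+1)) :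
    kOut i (Function.update x i a) = kOut i x := by
  unfold kOut
  congr 1
  apply filter_congr
  intro j _
  by_cases h : j = i
  · simp [h]
  · simp [h, Function.update_of_ne h]

lemma coeff_update {n k : ℕ} (i : Fin n) (x : Fin n → Fin (k+1)) (a : Fin (k+1)) :
    coeff i (Function.update x i a) = coeff i x := by
  unfold coeff
  rw [sOut_update, kOut_update]

lemma impIndex_eq {n k : ℕ} (i : Fin n) (v : (Fin n → Fin (k+1)) → ℝ) :
    impIndex i v =
      (∑ y ∈ univ.filter (fun y : Fin n → Fin (k+1) => y i = top k), coeff i y * v y)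
      - ∑ x ∈ univ.filter (fun x : Fin n → Fin (k+1) => x i = 0), coeff i x * v x := by
  unfold impIndex
  have h1 : ∀ x ∈ univ.filter (fun x : Fin n → Fin (k+1) => x i = 0),
      (((n - sOut i x - 1).factorial * (kOut i x).factorial : ℕ) : ℝ) /
        ((n + kOut i x - sOut i x).factorial : ℝ) *
        (v (Function.update x i (top k)) - v (Function.update x i 0))
      = coeff i x * v (Function.update x i (top k)) - coeff i x * v x := by
    intro x hx
    simp only [mem_filter] at hx
    have : Function.update x i 0 = x := by
      rw [← hx.2]; exact Function.update_eq_self i x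
    rw [this, coeff, mul_sub]
  rw [Finset.sum_congr rfl h1, Finset.sum_sub_distrib]
  congr 1
  apply Finset.sum_nbij' (i := fun x => Function.update x i (top k))
    (j := fun y => Function.update y i 0)
  · intro x hx; simp [Function.update_self]
  · intro y hy; simp [Function.update_self]
  · intro x hx
    simp only [mem_filter] at hx
    rw [Function.update_idem, ← hx.2, Function.update_eq_self]
  · intro y hy
    simp only [mem_filter] at hy
    rw [Function.update_idem, ← hy.2, Function.update_eq_self]
  · intro x hx
    rw [coeff_update]

lemma filter_ne_and {n : ℕ} (i : Fin n) (p : Fin n → Prop) [DecidablePred p] :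
    univ.filter (fun j : Fin n => j ≠ i ∧ p j) = (univ.filter p).erase i := by
  ext j
  simp [and_comm, mem_erase]

lemma coeff_sum {n k : ℕ} (y : Fin n → Fin (k+1)) :
    (∑ i ∈ univ.filter (fun i => y i = top k), coeff i y)
      - (∑ i ∈ univ.filter (fun i => y i = 0), coeff i y)
    = (if ∀ j, 0 < (y j : ℕ) then (1:ℝ) else 0)
      - (if ∀ j, (y j : ℕ) < k then (1:ℝ) else 0) := by
  by_cases hk0 : k = 0
  · subst hk0
    have htop : top 0 = (0 : Fin 1) := rfl
    rw [htop, sub_self]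
    have hPQ : (∀ j, 0 < (y j : ℕ)) ↔ (∀ j, (y j : ℕ) < 0) := by
      constructor
      · intro h j; have h1 := (y j).isLt; have h2 := h j; omega
      · intro h j; have h1 := h j; omega
    rw [if_congr hPQ rfl rfl, sub_self]
  have hk : 1 ≤ k := by omega
  set S := (univ.filter (fun j : Fin n => 0 < (y j : ℕ))).card with hSdef
  set K := (univ.filter (fun j : Fin n => (y j : ℕ) = k)).card with hKdef
  have hSn : S ≤ n := le_trans (card_filter_le _ _) (by simp)
  have hKS : K ≤ S := by
    apply card_le_card
    intro j hj
    simp only [mem_filter, mem_univ, true_and] at hj ⊢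
    omega
  have hfiltop : (univ.filter (fun i => y i = top k))
      = univ.filter (fun i : Fin n => (y i : ℕ) = k) := by
    apply filter_congr
    intro i _
    simp [top, Fin.ext_iff]
  have hfilzero : (univ.filter (fun i => y i = (0 : Fin (k+1))))
      = univ.filter (fun i : Fin n => ¬ 0 < (y i : ℕ)) := by
    apply filter_congr
    intro i _
    rw [Fin.ext_iff, Fin.val_zero]; omega
  have hcardzero : (univ.filter (fun i : Fin n => ¬ 0 < (y i : ℕ))).card = n - S := by
    rw [filter_not, card_sdiff_of_subset (filter_subset _ _)]
    simp [hSdef]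
  -- constant value on the top filter
  have hconstK : ∀ i ∈ univ.filter (fun i : Fin n => (y i : ℕ) = k),
      coeff i y = (((n - S).factorial * (K - 1).factorial : ℕ) : ℝ) /
        ((n + K - S).factorial : ℝ) := by
    intro i hi
    simp only [mem_filter, mem_univ, true_and] at hi
    have himemS : i ∈ univ.filter (fun j : Fin n => 0 < (y j : ℕ)) := by
      simp only [mem_filter, mem_univ, true_and]; omega
    have himemK : i ∈ univ.filter (fun j : Fin n => (y j : ℕ) = k) := by
      simp only [mem_filter, mem_univ, true_and]; exact hi
    have hS1 : 1 ≤ S := card_pos.mpr ⟨i, himemS⟩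
    have hK1 : 1 ≤ K := card_pos.mpr ⟨i, himemK⟩
    have hsi : sOut i y = S - 1 := by
      unfold sOut
      rw [filter_ne_and, card_erase_of_mem himemS]
    have hki : kOut i y = K - 1 := by
      unfold kOut
      rw [filter_ne_and, card_erase_of_mem himemK]
    unfold coeff
    rw [hsi, hki]
    have e1 : n - (S - 1) - 1 = n - S := by omega
    have e2 : n + (K - 1) - (S - 1) = n + K - S := by omega
    rw [e1, e2]
  have hconst0 : ∀ i ∈ univ.filter (fun i : Fin n => ¬ 0 < (y i : ℕ)),
      coeff i y = (((n - S - 1).factorial * K.factorial : ℕ) : ℝ) /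
        ((n + K - S).factorial : ℝ) := by
    intro i hi
    simp only [mem_filter, mem_univ, true_and] at hi
    have hnotS : i ∉ univ.filter (fun j : Fin n => 0 < (y j : ℕ)) := by
      simp only [mem_filter, mem_univ, true_and]; omega
    have hnotK : i ∉ univ.filter (fun j : Fin n => (y j : ℕ) = k) := by
      simp only [mem_filter, mem_univ, true_and]; omega
    have hsi : sOut i y = S := by
      unfold sOut
      rw [filter_ne_and, erase_eq_of_notMem hnotS]
    have hki : kOut i y = K := by
      unfold kOut
      rw [filter_ne_and, erase_eq_of_notMem hnotK]
    unfold coeff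
    rw [hsi, hki]
  rw [hfiltop, hfilzero, Finset.sum_congr rfl hconstK, Finset.sum_congr rfl hconst0,
    sum_const, sum_const, hcardzero, ← hKdef]
  have hiff1 : (∀ j, 0 < (y j : ℕ)) ↔ S = n := by
    constructor
    · intro h
      rw [hSdef, filter_true_of_mem (fun i _ => h i)]
      simp
    · intro h j
      have : (univ.filter (fun j : Fin n => 0 < (y j : ℕ))) = univ := by
        apply Finset.eq_univ_of_card
        simp only [Fintype.card_fin]; exact h
      have := this ▸ mem_univ j
      simpa using (mem_filter.mp this).2
  have hiff2 : (∀ j, (y j : ℕ) < k) ↔ K = 0 := by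
    rw [hKdef, card_eq_zero, filter_eq_empty_iff]
    constructor
    · intro h j _; have h1 := h j; omega
    · intro h j; have h1 := h (mem_univ j); have h2 := (y j).isLt; omega
  rw [if_congr hiff1 rfl rfl, if_congr hiff2 rfl rfl]
  rcases Nat.eq_zero_or_pos K with hK0 | hKpos
  · rw [hK0]
    simp only [zero_smul, if_pos]
    rcases eq_or_lt_of_le hSn with hSeq | hSlt
    · rw [if_pos hSeq, hSeq]
      simp
    · rw [if_neg (by omega)]
      obtain ⟨m, hm⟩ : ∃ m, n - S = m + 1 := ⟨n - S - 1, by omega⟩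
      have h2 : n + 0 - S = m + 1 := by omega
      have h3 : n - S - 1 = m := by omega
      rw [hm, h2]
      simp only [Nat.add_sub_cancel]
      rw [nsmul_eq_mul, Nat.factorial_succ]
      push_cast
      have := Nat.factorial_ne_zero m
      field_simp
      simp
  · have hS1 : 1 ≤ S := le_trans hKpos hKS
    rw [if_neg (show ¬ K = 0 by omega)]
    obtain ⟨a, ha⟩ : ∃ a, K = a + 1 := ⟨K - 1, by omega⟩
    rcases eq_or_lt_of_le hSn with hSeq | hSlt
    · rw [if_pos hSeq]
      have h1 : n - S = 0 := by omega
      have h2 : n + K - S = K := by omega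
      rw [h1, h2, ha]
      simp only [Nat.factorial_zero, one_mul, Nat.add_sub_cancel, zero_smul]
      rw [nsmul_eq_mul, Nat.factorial_succ]
      push_cast
      have := Nat.factorial_ne_zero a
      field_simp
    · rw [if_neg (by omega)]
      obtain ⟨b, hb⟩ : ∃ b, n - S = b + 1 := ⟨n - S - 1, by omega⟩
      have h2 : n + K - S = (n - S) + K := by omega
      rw [h2, hb, ha]
      simp only [Nat.add_sub_cancel]
      rw [nsmul_eq_mul, nsmul_eq_mul, Nat.factorial_succ a, Nat.factorial_succ b]
      push_cast
      have hD := Nat.factorial_ne_zero (b + 1 + (a + 1))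
      field_simp
      ring

theorem stmt_13 (n k : ℕ) (v : (Fin n → Fin (k+1)) → ℝ) (hv : v 0 = 0) :
    ∑ i : Fin n, impIndex i v =
      ∑ x ∈ univ.filter (fun x : Fin n → Fin (k+1) => ∀ j, (x j : ℕ) < k),
        (v (incrAll x) - v x) := by
  have swap1 : (∑ i : Fin n, ∑ y ∈ univ.filter (fun y : Fin n → Fin (k+1) => y i = top k),
        coeff i y * v y)
      = ∑ y : Fin n → Fin (k+1),
          (∑ i ∈ univ.filter (fun i => y i = top k), coeff i y) * v y := by
    simp only [Finset.sum_filter]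
    rw [Finset.sum_comm]
    apply Finset.sum_congr rfl
    intro y _
    rw [Finset.sum_mul]
    apply Finset.sum_congr rfl
    intro i _
    rw [ite_mul, zero_mul]
  have swap2 : (∑ i : Fin n, ∑ x ∈ univ.filter (fun x : Fin n → Fin (k+1) => x i = 0),
        coeff i x * v x)
      = ∑ y : Fin n → Fin (k+1),
          (∑ i ∈ univ.filter (fun i => y i = 0), coeff i y) * v y := by
    simp only [Finset.sum_filter]
    rw [Finset.sum_comm]
    apply Finset.sum_congr rfl
    intro y _
    rw [Finset.sum_mul]
    apply Finset.sum_congr rfl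
    intro i _
    rw [ite_mul, zero_mul]
  have hL : ∑ i : Fin n, impIndex i v
      = ∑ y : Fin n → Fin (k+1),
          ((if ∀ j, 0 < (y j : ℕ) then (1:ℝ) else 0)
            - (if ∀ j, (y j : ℕ) < k then (1:ℝ) else 0)) * v y := by
    simp only [impIndex_eq]
    rw [Finset.sum_sub_distrib, swap1, swap2, ← Finset.sum_sub_distrib]
    apply Finset.sum_congr rfl
    intro y _
    rw [← sub_mul, coeff_sum]
  rw [hL]
  have hR1 : ∑ y : Fin n → Fin (k+1),
        (if ∀ j, 0 < (y j : ℕ) then (1:ℝ) else 0) * v y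
      = ∑ y ∈ univ.filter (fun y : Fin n → Fin (k+1) => ∀ j, 0 < (y j : ℕ)), v y := by
    rw [Finset.sum_filter]
    apply Finset.sum_congr rfl
    intro y _
    rw [ite_mul, one_mul, zero_mul]
  have hR2 : ∑ y : Fin n → Fin (k+1),
        (if ∀ j, (y j : ℕ) < k then (1:ℝ) else 0) * v y
      = ∑ y ∈ univ.filter (fun y : Fin n → Fin (k+1) => ∀ j, (y j : ℕ) < k), v y := by
    rw [Finset.sum_filter]
    apply Finset.sum_congr rfl
    intro y _
    rw [ite_mul, one_mul, zero_mul]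
  simp only [sub_mul, one_mul, zero_mul]
  rw [Finset.sum_sub_distrib, hR1, hR2]
  have hbij : ∑ x ∈ univ.filter (fun x : Fin n → Fin (k+1) => ∀ j, (x j : ℕ) < k),
        v (incrAll x)
      = ∑ y ∈ univ.filter (fun y : Fin n → Fin (k+1) => ∀ j, 0 < (y j : ℕ)), v y := by
    apply Finset.sum_nbij' (i := fun x => incrAll x)
      (j := fun y => (fun j => (⟨(y j : ℕ) - 1, by have := (y j).isLt; omega⟩ : Fin (k+1))))
    · intro x hx
      simp only [mem_filter, mem_univ, true_and] at hx ⊢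
      intro j
      simp only [incrAll]
      have := hx j
      omega
    · intro y hy
      simp only [mem_filter, mem_univ, true_and] at hy ⊢
      intro j
      have h1 := hy j
      have h2 := (y j).isLt
      omega
    · intro x hx
      simp only [mem_filter, mem_univ, true_and] at hx
      funext j
      have h1 := hx j
      simp only [incrAll]
      apply Fin.ext
      simp only [Fin.val_mk]
      omega
    · intro y hy
      simp only [mem_filter, mem_univ, true_and] at hy
      funext j
      have h1 := hy j
      have h2 := (y j).isLt
      simp only [incrAll]
      apply Fin.ext
      simp only [Fin.val_mk]
      omega
    · intro x hx
      rfl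
  rw [Finset.sum_sub_distrib, hbij]
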